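/- The function F₁ satisfies all the defining properties of an N-function: F₁ is even, F₁(s) ≥ 0 for all s, F₁(s) = 0 if and only if s = 0, F₁(s)/|s| → 0 as s → 0 (s ≠ 0), and F₁(s)/|s| → +∞ as |s| → +∞. -/

import Mathlib

open Real Filter

noncomputable def F1 (δ₀ s : ℝ) : ℝ :=
  if s = 0 then 0
  else if |s| < δ₀ then -(1/2) * s^2 * Real.log (s^2)
  else -(1/2) * s^2 * (Real.log (δ₀^2) + 3) + 2*δ₀*|s| - δ₀^2/2

noncomputable def F1' (δ₀ s : ℝ) : ℝ :=
  if s = 0 then 0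
  else if |s| < δ₀ then -(Real.log (s^2) + 1) * s
  else -(Real.log (δ₀^2) + 3) * s + 2*δ₀*(Real.sign s)

noncomputable def F2 (δ₀ s : ℝ) : ℝ :=
  if |s| < δ₀ then 0
  else (1/2) * s^2 * Real.log (s^2/δ₀^2) + 2*δ₀*|s| - (3/2)*s^2 - δ₀^2/2

noncomputable def F2' (δ₀ s : ℝ) : ℝ :=
  if |s| < δ₀ then 0
  else s * Real.log (s^2/δ₀^2) - 2*s + 2*δ₀*(Real.sign s)

lemma F1_pos (δ₀ : ℝ) (hδ₀ : 0 < δ₀) (hδ₀' : δ₀ < Real.exp (-(3/2))) {s : ℝ}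
    (hs : s ≠ 0) : 0 < F1 δ₀ s := by
  have hlogδ : Real.log δ₀ < -(3/2) := by
    calc Real.log δ₀ < Real.log (Real.exp (-(3/2))) :=
          Real.log_lt_log hδ₀ hδ₀'
      _ = -(3/2) := Real.log_exp _
  have hc : Real.log (δ₀^2) + 3 < 0 := by
    rw [Real.log_pow]; push_cast; nlinarith
  have habs : 0 < |s| := abs_pos.mpr hs
  rw [F1, if_neg hs]
  split_ifs with h
  · -- |s| < δ₀, so s^2 < 1 and log (s^2) < 0
    have h1 : |s| < 1 := by
      have : Real.exp (-(3/2)) < 1 := by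
        rw [Real.exp_lt_one_iff]; norm_num
      linarith
    have hs2 : s^2 < 1 := by
      have := abs_nonneg s
      nlinarith [sq_abs s]
    have hlog : Real.log (s^2) < 0 :=
      Real.log_neg (by positivity) hs2
    nlinarith [sq_nonneg s, pow_pos (abs_pos.mpr hs) 2, sq_abs s]
  · push_neg at h
    nlinarith [sq_nonneg s, mul_le_mul_of_nonneg_left h (le_of_lt hδ₀)]

theorem stmt_6 (δ₀ : ℝ) (hδ₀ : 0 < δ₀) (hδ₀' : δ₀ < Real.exp (-(3/2))) :
    (∀ s : ℝ, F1 δ₀ (-s) = F1 δ₀ s) ∧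
    (∀ s : ℝ, 0 ≤ F1 δ₀ s) ∧
    (∀ s : ℝ, F1 δ₀ s = 0 ↔ s = 0) ∧
    Tendsto (fun s : ℝ => F1 δ₀ s / |s|) (nhdsWithin 0 {0}ᶜ) (nhds 0) ∧
    Tendsto (fun s : ℝ => F1 δ₀ s / |s|) (cocompact ℝ) atTop := by
  have hc : 0 < -(Real.log (δ₀^2) + 3) := by
    have hlogδ : Real.log δ₀ < -(3/2) := by
      calc Real.log δ₀ < Real.log (Real.exp (-(3/2))) :=
            Real.log_lt_log hδ₀ hδ₀'
        _ = -(3/2) := Real.log_exp _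
    rw [Real.log_pow]; push_cast; nlinarith
  refine ⟨?_, ?_, ?_, ?_, ?_⟩
  · intro s
    simp only [F1, neg_eq_zero, abs_neg, neg_sq]
  · intro s
    rcases eq_or_ne s 0 with rfl | hs
    · simp [F1]
    · exact (F1_pos δ₀ hδ₀ hδ₀' hs).le
  · intro s
    constructor
    · intro h
      by_contra hs
      exact (F1_pos δ₀ hδ₀ hδ₀' hs).ne' h
    · rintro rfl; simp [F1]
  · -- limit at 0
    have key : Tendsto (fun s : ℝ => -(|s| * Real.log |s|)) (nhds 0) (nhds 0) := by
      have := (continuous_mul_log.comp continuous_abs).neg.tendsto 0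
      rw [show ((-(fun x : ℝ => x * Real.log x) ∘ abs) 0) = 0 by simp] at this
      exact this
    refine Tendsto.congr' ?_ (key.mono_left nhdsWithin_le_nhds)
    have hev : ∀ᶠ s : ℝ in nhdsWithin 0 {0}ᶜ, |s| < δ₀ ∧ s ≠ 0 := by
      filter_upwards [nhdsWithin_le_nhds (Metric.ball_mem_nhds (0:ℝ) hδ₀),
        self_mem_nhdsWithin] with s hs hs'
      · exact ⟨by simpa [Real.dist_eq] using hs, hs'⟩
    filter_upwards [hev] with s hs
    obtain ⟨h1, h2⟩ := hs
    rw [F1, if_neg h2, if_pos h1]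
    have habs : |s| ≠ 0 := abs_ne_zero.mpr h2
    have hsq : s^2 = |s| * |s| := by rw [← sq_abs]; ring
    rw [Real.log_pow, Real.log_abs] at *
    rw [hsq]
    field_simp
    push_cast; ring
  · -- limit at cocompact
    have habs : Tendsto (fun s : ℝ => |s|) (cocompact ℝ) atTop := by
      exact tendsto_norm_cocompact_atTop (E := ℝ)
    have hg : Tendsto (fun s : ℝ => (-(Real.log (δ₀^2) + 3))/2 * |s|)
        (cocompact ℝ) atTop :=
      habs.const_mul_atTop (by positivity)
    refine tendsto_atTop_mono' _ ?_ hg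
    filter_upwards [habs.eventually_ge_atTop δ₀] with s hs
    have hspos : 0 < |s| := lt_of_lt_of_le hδ₀ hs
    have hns : s ≠ 0 := by intro h; rw [h] at hspos; simp at hspos
    rw [F1, if_neg hns, if_neg (not_lt.mpr hs)]
    rw [le_div_iff₀ hspos]
    have hsq : s^2 = |s| * |s| := by rw [← sq_abs]; ring
    nlinarith [mul_le_mul_of_nonneg_left hs hδ₀.le]
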